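/- Let v : ℝ → ℝ be continuous with v > 0, define f₀(k) = k/v(k) + v(k)/2 and f₁(k) = k/v(k) − v(k)/2, and suppose f₀ and f₁ are strictly increasing and liminf_{k→∞} f₁(k) = ∞. Then for every p ∈ (0,1], the function f_p := p·f₁ + (1−p)·f₀ is a strictly increasing bijection from ℝ onto ℝ. -/

import Mathlib

open Filter

theorem f_p_bijective
    (v : ℝ → ℝ) (hv : Continuous v) (hvpos : ∀ k, 0 < v k)
    (f₀ f₁ : ℝ → ℝ)
    (hf₀ : ∀ k, f₀ k = k / v k + v k / 2)
    (hf₁ : ∀ k, f₁ k = k / v k - v k / 2)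
    (hmono₀ : StrictMono f₀) (hmono₁ : StrictMono f₁)
    (hlim : Filter.Tendsto f₁ Filter.atTop Filter.atTop) :
    ∀ p ∈ Set.Ioc (0:ℝ) 1,
      StrictMono (fun k => p * f₁ k + (1 - p) * f₀ k) ∧
      Function.Bijective (fun k => p * f₁ k + (1 - p) * f₀ k) := by
  intro p hp
  obtain ⟨hp0, hp1⟩ := hp
  set g : ℝ → ℝ := fun k => p * f₁ k + (1 - p) * f₀ k with hg
  -- strict monotonicity
  have hsm : StrictMono g := by
    intro a b hab
    have h1 := hmono₁ hab
    have h0 := hmono₀.monotone hab.le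
    have : p * f₁ a < p * f₁ b := by nlinarith
    have : (1 - p) * f₀ a ≤ (1 - p) * f₀ b := by nlinarith
    simp only [hg]
    nlinarith
  refine ⟨hsm, hsm.injective, ?_⟩
  -- continuity
  have hvne : ∀ k, v k ≠ 0 := fun k => (hvpos k).ne'
  have hc₁ : Continuous f₁ := by
    have : Continuous fun k : ℝ => k / v k - v k / 2 :=
      (continuous_id.div hv hvne).sub (hv.div_const 2)
    simpa [funext hf₁] using this
  have hc₀ : Continuous f₀ := by
    have : Continuous fun k : ℝ => k / v k + v k / 2 :=
      (continuous_id.div hv hvne).add (hv.div_const 2)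
    simpa [funext hf₀] using this
  have hcg : Continuous g := (continuous_const.mul hc₁).add (continuous_const.mul hc₀)
  -- f₀ = f₁ + v, so g ≥ f₁ and g → ∞ at ∞
  have hge : ∀ k, f₁ k ≤ g k := by
    intro k
    have hvk := hvpos k
    simp only [hg, hf₀ k, hf₁ k]
    nlinarith
  have htop : Tendsto g atTop atTop := tendsto_atTop_mono hge hlim
  -- f₁ k ≤ -√(-2k) for k < 0
  have hbot₁ : Tendsto f₁ atBot atBot := by
    have key : ∀ k : ℝ, k < 0 → f₁ k ≤ -Real.sqrt (-2 * k) := by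
      intro k hk
      have hvk := hvpos k
      have hs : Real.sqrt (-2 * k) ^ 2 = -2 * k := by
        rw [Real.sq_sqrt]; linarith
      have hsnn : 0 ≤ Real.sqrt (-2 * k) := Real.sqrt_nonneg _
      rw [hf₁]
      rw [div_sub' (hvne k), div_le_iff₀ hvk] at *
      nlinarith [sq_nonneg (v k - Real.sqrt (-2 * k))]
    have hlim2 : Tendsto (fun k : ℝ => -Real.sqrt (-2 * k)) atBot atBot := by
      have hs : Tendsto (fun k : ℝ => Real.sqrt (-2 * k)) atBot atTop := by
        rw [tendsto_atTop]
        intro b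
        filter_upwards [eventually_le_atBot (-(max b 0) ^ 2 / 2)] with k hk
        have h1 : (max b 0) ^ 2 ≤ -2 * k := by linarith
        calc b ≤ max b 0 := le_max_left _ _
          _ = Real.sqrt ((max b 0) ^ 2) := (Real.sqrt_sq (le_max_right _ _)).symm
          _ ≤ Real.sqrt (-2 * k) := Real.sqrt_le_sqrt h1
      exact tendsto_neg_atBot_iff.mpr hs
    apply tendsto_atBot_mono' _ _ hlim2
    filter_upwards [eventually_lt_atBot (0:ℝ)] with k hk using key k hk
  -- g → -∞ at -∞
  have hbot : Tendsto g atBot atBot := by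
    have hub : ∀ᶠ k in atBot, g k ≤ p * f₁ k + (1 - p) * f₀ 0 := by
      filter_upwards [eventually_le_atBot (0:ℝ)] with k hk
      have := hmono₀.monotone hk
      simp only [hg]
      nlinarith
    have : Tendsto (fun k => p * f₁ k + (1 - p) * f₀ 0) atBot atBot := by
      have h1 : Tendsto (fun k => p * f₁ k) atBot atBot :=
        (tendsto_const_mul_atBot_of_pos hp0).2 hbot₁
      exact tendsto_atBot_add_const_right _ _ h1
    exact tendsto_atBot_mono' _ hub this
  exact hcg.surjective htop hbot
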